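/- Let B ∈ M_{m,n}(𝔽_q[[t]]) be a glissando matrix. Suppose P ∈ GL_m(𝔽_q[[t]]) and Q ∈ GL_n(𝔽_q[[t]]) are invertible matrices such that P·B·Q is a rectangular diagonal matrix (all off-diagonal entries zero) whose diagonal entries d_0, d_1, …, d_{min(m,n)−1} satisfy d_i ∣ d_{i+1} for all i. Then t^i divides d_i for every i with 0 ≤ i ≤ min(m,n)−1. Equivalently, the elementary divisors s_1 ≤ s_2 ≤ ⋯ of B (where t^{s_l} is the (l−1, l−1)-entry of the Smith normal form of B, with s_l = +∞ corresponding to a zero diagonal entry) satisfy s_l ≥ l − 1 for every l. -/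

import Mathlib

open Polynomial

noncomputable section DrinfeldGM

/-- Integer-argument binomial coefficient `C(c,d)`, equal to `0` whenever any of
`c`, `d`, `c - d` is negative. -/
def intChoose (c d : ℤ) : ℤ :=
  if 0 ≤ c ∧ 0 ≤ d ∧ d ≤ c then (Nat.choose c.toNat d.toNat : ℤ) else 0

/-- The `(i,j)` entry of the matrix of the `U`-operator on `S_k(Γ₁(t))` in the
Bandini–Valentino basis (here `t` is the polynomial variable `X`).  For `i = j` it is
`(-t)^j C(k-2-j, j)`; for `i = j + h(q-1)` with `h ≠ 0` (equivalently `(q-1) ∣ i - j`,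
`i ≠ j`, in which case `h(q-1) = i - j`) it is
`-t^j (C(k-2-i, j-i) + (-1)^{j+1} C(k-2-i, j))`; and it is `0` otherwise. -/
def Uent (F : Type*) [Field F] (q k : ℕ) (i j : ℕ) : Polynomial F :=
  if i = j then
    (-Polynomial.X : Polynomial F) ^ j * ((intChoose ((k : ℤ) - 2 - (j : ℤ)) (j : ℤ) : ℤ) : Polynomial F)
  else if ((q : ℤ) - 1) ∣ ((i : ℤ) - (j : ℤ)) then
    -((Polynomial.X : Polynomial F) ^ j *
      ((intChoose ((k : ℤ) - 2 - (i : ℤ)) ((j : ℤ) - (i : ℤ)) +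
        (-1) ^ (j + 1) * intChoose ((k : ℤ) - 2 - (i : ℤ)) (j : ℤ) : ℤ) : Polynomial F))
  else 0

/-- The representing matrix `U^{(k)} ∈ M_{k-1}(𝔽_q[t])` of the `U`-operator on
`S_k(Γ₁(t))`, rows and columns indexed by `0, …, k-2`. -/
def Umat (F : Type*) [Field F] (q k : ℕ) :
    Matrix (Fin (k - 1)) (Fin (k - 1)) (Polynomial F) :=
  Matrix.of fun i j => Uent F q k (i : ℕ) (j : ℕ)

/-- A matrix over `𝔽_q[[t]]` is *glissando* if every entry of its `j`-th column is an
`𝔽_q`-multiple of `t^j`. -/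
def Glissando {F : Type*} [Field F] {m n : ℕ}
    (B : Matrix (Fin m) (Fin n) (PowerSeries F)) : Prop :=
  ∀ i j, ∃ c : F, B i j = PowerSeries.C c * (PowerSeries.X : PowerSeries F) ^ (j : ℕ)

/-- The inclusion `𝔽_q[t] → 𝔽_q[[t]]`. -/
def polyToPS (F : Type*) [Field F] : Polynomial F →+* PowerSeries F :=
  Polynomial.coeToPowerSeries.ringHom

/-- The inclusion of `𝔽_q[[t]]` into a fixed algebraic closure `K̄` of `K = 𝔽_q((t))`. -/
def psToKbar (F : Type*) [Field F] :
    PowerSeries F →+* AlgebraicClosure (LaurentSeries F) :=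
  (algebraMap (LaurentSeries F) (AlgebraicClosure (LaurentSeries F))).comp
    (algebraMap (PowerSeries F) (LaurentSeries F))

/-- The inclusion `𝔽_q[t] → K̄`. -/
def polyToKbar (F : Type*) [Field F] :
    Polynomial F →+* AlgebraicClosure (LaurentSeries F) :=
  (psToKbar F).comp (polyToPS F)

/-- The element `t` of `K̄`. -/
def tbar (F : Type*) [Field F] : AlgebraicClosure (LaurentSeries F) :=
  psToKbar F PowerSeries.X

/-- Integrality over `𝔽_q[[t]]` of an element of `K̄`. -/
def IntegralPS (F : Type*) [Field F] (x : AlgebraicClosure (LaurentSeries F)) : Prop :=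
  letI : Algebra (PowerSeries F) (AlgebraicClosure (LaurentSeries F)) := (psToKbar F).toAlgebra
  IsIntegral (PowerSeries F) x

/-- `HasVal F λ α` says that `λ ∈ K̄` is nonzero and has valuation `α` for the unique
extension `v` to `K̄` of the `t`-adic valuation with `v(t) = 1`: writing `α = a/b` with
`b > 0`, this means that both `λ^b/t^a` and `t^a/λ^b` are integral over `𝔽_q[[t]]`. -/
def HasVal (F : Type*) [Field F] (lam : AlgebraicClosure (LaurentSeries F)) (α : ℚ) : Prop :=
  lam ≠ 0 ∧ ∃ a b : ℤ, 0 < b ∧ α = (a : ℚ) / (b : ℚ) ∧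
    IntegralPS F (lam ^ b / tbar F ^ a) ∧ IntegralPS F (tbar F ^ a / lam ^ b)

/-- `d(k, α)`: the number of roots `λ` of `det(X·I - U^{(k)})` in `K̄` with `v(λ) = α`,
counted with multiplicity.  This is the dimension of the slope-`α` generalized eigenspace
of the `U`-operator on `S_k(Γ₁(t))`. -/
def dDim (F : Type*) [Field F] (q k : ℕ) (α : ℚ) : ℕ :=
  letI := Classical.decPred fun lam : AlgebraicClosure (LaurentSeries F) => HasVal F lam α
  Multiset.card <| Multiset.filter (fun lam => HasVal F lam α) <|
    (((Umat F q k).charpoly).map (polyToKbar F)).roots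

/-- `det(I - t^l X B)` for a square matrix `B` over `𝔽_q[[t]]`, as a polynomial in `X`
over `𝔽_q[[t]]`. -/
def charSeriesTw (F : Type*) [Field F] {m : ℕ} (l : ℕ)
    (B : Matrix (Fin m) (Fin m) (PowerSeries F)) : Polynomial (PowerSeries F) :=
  Matrix.det (1 - (Polynomial.C ((PowerSeries.X : PowerSeries F) ^ l) * Polynomial.X) •
    B.map Polynomial.C)

/-- `det(I - X B)` for a square matrix `B` over `𝔽_q[[t]]`. -/
def charSeriesPS (F : Type*) [Field F] {m : ℕ}
    (B : Matrix (Fin m) (Fin m) (PowerSeries F)) : Polynomial (PowerSeries F) :=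
  Matrix.det (1 - (Polynomial.X : Polynomial (PowerSeries F)) • B.map Polynomial.C)

/-- `P^{(k)}(X) = det(I - X·U^{(k)}) ∈ 𝔽_q[t][X]`. -/
def Pser (F : Type*) [Field F] (q k : ℕ) : Polynomial (Polynomial F) :=
  Matrix.det (1 - (Polynomial.X : Polynomial (Polynomial F)) • (Umat F q k).map Polynomial.C)


/-- Lower bound for the elementary divisors of a glissando matrix: if `P·B·Q` is a Smith
normal form of a glissando matrix `B` (with `P`, `Q` invertible, `P·B·Q` rectangular
diagonal with diagonal entries forming a divisibility chain), then `t^i` divides the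
`i`-th diagonal entry for every `i`. -/
theorem glissando_smith_diag_dvd
    (p q : ℕ) (hp : p.Prime) (hq : ∃ e : ℕ, 1 ≤ e ∧ q = p ^ e)
    (F : Type) [Field F] [Fintype F] (hF : Fintype.card F = q)
    (m n : ℕ) (B : Matrix (Fin m) (Fin n) (PowerSeries F)) (hB : Glissando B)
    (P : Matrix (Fin m) (Fin m) (PowerSeries F)) (Q : Matrix (Fin n) (Fin n) (PowerSeries F))
    (hP : IsUnit P) (hQ : IsUnit Q)
    (hdiag : ∀ (i : Fin m) (j : Fin n), (i : ℕ) ≠ (j : ℕ) → (P * B * Q) i j = 0)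
    (hchain : ∀ (i : ℕ) (him : i + 1 < m) (hin : i + 1 < n),
      (P * B * Q) ⟨i, by omega⟩ ⟨i, by omega⟩ ∣ (P * B * Q) ⟨i + 1, him⟩ ⟨i + 1, hin⟩)
    (i : ℕ) (him : i < m) (hin : i < n) :
    (PowerSeries.X : PowerSeries F) ^ i ∣ (P * B * Q) ⟨i, him⟩ ⟨i, hin⟩ := by
  by_contra hdvd
  set D := P * B * Q with hD
  -- chain of divisibility
  have chain : ∀ a b : ℕ, ∀ (hab : a ≤ b) (hbm : b < m) (hbn : b < n),
      D ⟨a, by omega⟩ ⟨a, by omega⟩ ∣ D ⟨b, hbm⟩ ⟨b, hbn⟩ := by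
    intro a b hab
    induction b, hab using Nat.le_induction with
    | base => intro h1 h2; exact dvd_refl _
    | succ b hab ih =>
      intro h1 h2
      exact (ih (by omega) (by omega)).trans (hchain b h1 h2)
  -- inverse of Q
  have hQd : IsUnit Q.det := (Matrix.isUnit_iff_isUnit_det Q).mp hQ
  have hQQ' : Q * Q⁻¹ = 1 := Matrix.mul_nonsing_inv Q hQd
  have hQ'Q : Q⁻¹ * Q = 1 := Matrix.nonsing_inv_mul Q hQd
  -- D * Q⁻¹ = P * B
  have hDQ : D * Q⁻¹ = P * B := by
    rw [hD, Matrix.mul_assoc (P * B), hQQ', Matrix.mul_one]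
  -- key divisibility
  have key : ∀ (a : ℕ) (ham : a < m) (han : a < n) (j' : Fin n),
      (PowerSeries.X : PowerSeries F) ^ (j' : ℕ) ∣
        D ⟨a, ham⟩ ⟨a, han⟩ * Q⁻¹ ⟨a, han⟩ j' := by
    intro a ham han j'
    have h1 : (D * Q⁻¹) ⟨a, ham⟩ j' = D ⟨a, ham⟩ ⟨a, han⟩ * Q⁻¹ ⟨a, han⟩ j' := by
      rw [Matrix.mul_apply]
      rw [Finset.sum_eq_single (⟨a, han⟩ : Fin n)]
      · intro b _ hb
        have : (a : ℕ) ≠ (b : ℕ) := fun h => hb (by ext; simp [← h])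
        rw [hdiag ⟨a, ham⟩ b this, zero_mul]
      · intro h; exact absurd (Finset.mem_univ _) h
    rw [← h1, hDQ, Matrix.mul_apply]
    apply Finset.dvd_sum
    intro r _
    obtain ⟨c, hc⟩ := hB r j'
    rw [hc]
    exact Dvd.dvd.mul_left (Dvd.dvd.mul_left dvd_rfl _) _
  -- for a ≤ i, X^i does not divide D a a
  have hnd : ∀ (a : ℕ) (ha : a ≤ i), ¬ (PowerSeries.X : PowerSeries F) ^ i ∣
      D ⟨a, by omega⟩ ⟨a, by omega⟩ := by
    intro a ha h
    exact hdvd (h.trans (chain a i ha him hin))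
  -- constant coefficient vanishing
  have hzero : ∀ (a : ℕ) (ha : a ≤ i) (j' : Fin n), i ≤ (j' : ℕ) →
      PowerSeries.constantCoeff (Q⁻¹ ⟨a, by omega⟩ j') = 0 := by
    intro a ha j' hj'
    by_contra h0
    have hu : IsUnit (Q⁻¹ ⟨a, by omega⟩ j') :=
      PowerSeries.isUnit_iff_constantCoeff.mpr (isUnit_iff_ne_zero.mpr h0)
    have := hu.dvd_mul_right.mp (key a (by omega) (by omega) j')
    exact hnd a ha ((pow_dvd_pow _ hj').trans this)
  -- reduce mod t
  set φ := PowerSeries.constantCoeff (R := F)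
  set Qb : Matrix (Fin n) (Fin n) F := Q.map φ with hQb
  set Qb' : Matrix (Fin n) (Fin n) F := (Q⁻¹).map φ with hQb'
  have hQbQ : Qb' * Qb = 1 := by
    rw [hQb, hQb', ← Matrix.map_mul, hQ'Q, Matrix.map_one _ (map_zero _) (map_one _)]
  -- the i+1 rows of Qb' indexed by 0..i, restricted to columns 0..i-1
  have hle1 : i + 1 ≤ n := hin
  have hle2 : i ≤ n := le_of_lt hin
  set g : Fin (i + 1) → (Fin i → F) :=
    fun a j' => Qb' (Fin.castLE hle1 a) (Fin.castLE hle2 j') with hg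
  have hnli : ¬ LinearIndependent F g := by
    intro h
    have h1 := h.fintype_card_le_finrank
    rw [Module.finrank_pi, Fintype.card_fin, Fintype.card_fin] at h1
    omega
  obtain ⟨lam, hlam, k, hk⟩ := Fintype.not_linearIndependent_iff.mp hnli
  -- full-width combination vanishes
  have hfull : ∀ j' : Fin n, ∑ a : Fin (i + 1), lam a * Qb' (Fin.castLE hle1 a) j' = 0 := by
    intro j'
    by_cases hj' : (j' : ℕ) < i
    · have := congrFun hlam ⟨j', hj'⟩
      simpa [hg] using this
    · apply Finset.sum_eq_zero
      intro a _
      have : Qb' (Fin.castLE hle1 a) j' = 0 := by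
        rw [hQb', Matrix.map_apply]
        exact hzero a (by omega) j' (by omega)
      rw [this, mul_zero]
  -- derive lam k = 0
  have : lam k = 0 := by
    have h2 : ∀ b : Fin n,
        ∑ a : Fin (i+1), lam a * (Qb' * Qb) (Fin.castLE hle1 a) b = 0 := by
      intro b
      have : ∑ a : Fin (i+1), lam a * (Qb' * Qb) (Fin.castLE hle1 a) b
          = ∑ j' : Fin n, (∑ a : Fin (i+1), lam a * Qb' (Fin.castLE hle1 a) j') * Qb j' b := by
        simp only [Matrix.mul_apply, Finset.mul_sum, Finset.sum_mul, mul_assoc]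
        rw [Finset.sum_comm]
      rw [this]
      simp [hfull]
    have h3 := h2 (Fin.castLE hle1 k)
    rw [hQbQ] at h3
    rw [Finset.sum_eq_single k] at h3
    · rwa [Matrix.one_apply_eq, mul_one] at h3
    · intro a _ hak
      rw [Matrix.one_apply_ne, mul_zero]
      exact fun h => hak (Fin.castLE_injective _ h)
    · intro h; exact absurd (Finset.mem_univ _) h
  exact hk this


end DrinfeldGM
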